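/- If T : c₀ → c₀ is a surjective linear isometry, then for every j ∈ ℕ there is k ∈ ℕ with T(eⱼ) = e_k or T(eⱼ) = −e_k. -/

import Mathlib

open scoped ZeroAtInfty

/-- The `j`-th standard unit vector of `c₀`. -/
noncomputable def stdUnitVec (j : ℕ) : C₀(ℕ, ℝ) where
  toFun := Pi.single j 1
  continuous_toFun := continuous_of_discreteTopology
  zero_at_infty' := by
    have h : (fun _ : ℕ => (0 : ℝ)) =ᶠ[Filter.cocompact ℕ] Pi.single j (1 : ℝ) := by
      rw [cocompact_eq_atTop (α := ℕ)]
      filter_upwards [Filter.eventually_gt_atTop j] with n hn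
      exact (Pi.single_eq_of_ne (M := fun _ : ℕ => ℝ) hn.ne' 1).symm
    exact Filter.Tendsto.congr' h tendsto_const_nhds

lemma stdUnitVec_apply (j n : ℕ) : stdUnitVec j n = if n = j then 1 else 0 := by
  have h : (stdUnitVec j) n = Pi.single (M := fun _ : ℕ => ℝ) j 1 n := rfl
  rw [h, Pi.single_apply]

lemma c0_apply_le_norm (f : C₀(ℕ, ℝ)) (n : ℕ) : |f n| ≤ ‖f‖ := by
  rw [← ZeroAtInftyContinuousMap.norm_toBCF_eq_norm]
  exact f.toBCF.norm_coe_le_norm n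

lemma c0_norm_le (f : C₀(ℕ, ℝ)) {c : ℝ} (hc : 0 ≤ c) (h : ∀ n, |f n| ≤ c) : ‖f‖ ≤ c := by
  rw [← ZeroAtInftyContinuousMap.norm_toBCF_eq_norm]
  exact (BoundedContinuousFunction.norm_le hc).mpr h

/-- The sup norm of an element of `c₀` is attained. -/
lemma c0_exists_abs_eq_norm (f : C₀(ℕ, ℝ)) : ∃ n, |f n| = ‖f‖ := by
  rcases eq_or_ne ‖f‖ 0 with h0 | h0
  · refine ⟨0, ?_⟩
    have : f = 0 := norm_eq_zero.mp h0
    simp [this, h0]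
  · have hpos : 0 < ‖f‖ := lt_of_le_of_ne (norm_nonneg f) (Ne.symm h0)
    have htend : Filter.Tendsto f Filter.atTop (nhds 0) := by
      have := f.zero_at_infty'
      rwa [cocompact_eq_atTop (α := ℕ)] at this
    have hev : ∀ᶠ n in Filter.atTop, |f n| < ‖f‖ / 2 := by
      have := (Metric.tendsto_nhds.mp htend) (‖f‖ / 2) (by linarith)
      simpa [Real.dist_eq] using this
    obtain ⟨N, hN⟩ := Filter.eventually_atTop.mp hev
    -- some coordinate exceeds ‖f‖/2
    have hbig : ∃ n₀, ‖f‖ / 2 < |f n₀| := by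
      by_contra h
      push_neg at h
      have := c0_norm_le f (by linarith) h
      linarith
    obtain ⟨n₀, hn₀⟩ := hbig
    have hn₀N : n₀ < N + 1 := by
      by_contra h
      push_neg at h
      exact absurd (hN n₀ (by omega)) (by linarith)
    obtain ⟨m, hmmem, hm⟩ := (Finset.range (N + 1)).exists_max_image (fun n => |f n|)
      ⟨n₀, Finset.mem_range.mpr hn₀N⟩
    refine ⟨m, le_antisymm (c0_apply_le_norm f m) ?_⟩
    have hm2 : ‖f‖ / 2 < |f m| := lt_of_lt_of_le hn₀ (hm n₀ (Finset.mem_range.mpr hn₀N))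
    refine c0_norm_le f (abs_nonneg _) fun n => ?_
    by_cases hn : n < N + 1
    · exact hm n (Finset.mem_range.mpr hn)
    · have := hN n (by omega)
      linarith

lemma norm_stdUnitVec (j : ℕ) : ‖stdUnitVec j‖ = 1 := by
  refine le_antisymm (c0_norm_le _ zero_le_one fun n => ?_) ?_
  · rw [stdUnitVec_apply]; split <;> simp
  · have := c0_apply_le_norm (stdUnitVec j) j
    rwa [stdUnitVec_apply, if_pos rfl, abs_one] at this

lemma norm_comb_le {a b : ℕ} (hab : a ≠ b) {t : ℝ} (ht : |t| = 1) :
    ‖stdUnitVec a + t • stdUnitVec b‖ ≤ 1 := by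
  refine c0_norm_le _ zero_le_one fun m => ?_
  have : (stdUnitVec a + t • stdUnitVec b) m = stdUnitVec a m + t * stdUnitVec b m := by simp
  rw [this, stdUnitVec_apply, stdUnitVec_apply]
  rcases eq_or_ne m a with rfl | hma
  · rw [if_pos rfl, if_neg hab]
    simp
  · rw [if_neg hma]
    split
    · simp [ht.le]
    · simp

lemma abs_add_abs_le {a b c : ℝ} (h1 : |a + b| ≤ c) (h2 : |a - b| ≤ c) : |a| + |b| ≤ c := by
  rw [abs_le] at h1 h2
  rcases abs_cases a with ⟨ea, _⟩ | ⟨ea, _⟩ <;> rcases abs_cases b with ⟨eb, _⟩ | ⟨eb, _⟩ <;>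
    rw [ea, eb] <;> linarith

/-- If `‖g‖ ≤ 1`, `|s| = 1` and `‖e_r + s • g‖ ≥ 2`, then `|g r| = 1`. -/
lemma attain_of_two (g : C₀(ℕ, ℝ)) (hg : ‖g‖ ≤ 1) (r : ℕ) {s : ℝ} (hs : |s| = 1)
    (h2 : (2 : ℝ) ≤ ‖stdUnitVec r + s • g‖) : 1 ≤ |g r| := by
  obtain ⟨m, hm⟩ := c0_exists_abs_eq_norm (stdUnitVec r + s • g)
  have hcoe : (stdUnitVec r + s • g) m = stdUnitVec r m + s * g m := by simp
  rw [hcoe] at hm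
  have hgm : |g m| ≤ 1 := le_trans (c0_apply_le_norm g m) hg
  have hmr : m = r := by
    by_contra h
    rw [stdUnitVec_apply, if_neg h] at hm
    have : |s * g m| ≤ 1 := by rw [abs_mul, hs, one_mul]; exact hgm
    rw [zero_add] at hm
    linarith [hm ▸ h2]
  subst hmr
  rw [stdUnitVec_apply, if_pos rfl] at hm
  have h1 : (2 : ℝ) ≤ |1 + s * g m| := hm ▸ h2
  have h3 : |1 + s * g m| ≤ 1 + |g m| := by
    calc |1 + s * g m| ≤ |(1 : ℝ)| + |s * g m| := abs_add_le _ _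
    _ = 1 + |g m| := by rw [abs_one, abs_mul, hs, one_mul]
  linarith

/-- A surjective linear isometry of `c₀` maps each standard unit vector to a
standard unit vector up to sign. -/
theorem c0_isometry_unit_vectors (T : C₀(ℕ, ℝ) →ₗ[ℝ] C₀(ℕ, ℝ))
    (hiso : Isometry T) (hsurj : Function.Surjective T) :
    ∀ j : ℕ, ∃ k : ℕ, T (stdUnitVec j) = stdUnitVec k ∨ T (stdUnitVec j) = -stdUnitVec k := by
  have normT : ∀ z, ‖T z‖ = ‖z‖ := hiso.norm_map_of_map_zero (map_zero T)
  -- Lemma A : coordinates of images of distinct unit vectors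
  have lemA : ∀ i j : ℕ, i ≠ j → ∀ n : ℕ,
      |(T (stdUnitVec i)) n| + |(T (stdUnitVec j)) n| ≤ 1 := by
    intro i j hij n
    have h1 : ‖T (stdUnitVec i) + T (stdUnitVec j)‖ ≤ 1 := by
      rw [← map_add, normT]
      simpa using norm_comb_le hij (t := (1 : ℝ)) (by norm_num)
    have h2 : ‖T (stdUnitVec i) - T (stdUnitVec j)‖ ≤ 1 := by
      rw [← map_sub, normT]
      have : stdUnitVec i - stdUnitVec j = stdUnitVec i + (-1 : ℝ) • stdUnitVec j := by
        module
      rw [this]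
      exact norm_comb_le hij (by norm_num)
    have a1 : |(T (stdUnitVec i)) n + (T (stdUnitVec j)) n| ≤ 1 := by
      have := c0_apply_le_norm (T (stdUnitVec i) + T (stdUnitVec j)) n
      simp only [ZeroAtInftyContinuousMap.coe_add, Pi.add_apply] at this
      exact le_trans this h1
    have a2 : |(T (stdUnitVec i)) n - (T (stdUnitVec j)) n| ≤ 1 := by
      have := c0_apply_le_norm (T (stdUnitVec i) - T (stdUnitVec j)) n
      simp only [ZeroAtInftyContinuousMap.coe_sub, Pi.sub_apply] at this
      exact le_trans this h2
    exact abs_add_abs_le a1 a2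
  intro j
  set f := T (stdUnitVec j) with hf
  have hnf : ‖f‖ = 1 := by rw [hf, normT, norm_stdUnitVec]
  obtain ⟨k, hk⟩ := c0_exists_abs_eq_norm f
  rw [hnf] at hk
  -- the key step : coordinates other than k vanish
  have key : ∀ n, n ≠ k → f n = 0 := by
    intro n hn
    obtain ⟨x, hx⟩ := hsurj (stdUnitVec n)
    have hxn : ‖x‖ = 1 := by rw [← normT x, hx, norm_stdUnitVec]
    obtain ⟨i, hi⟩ := c0_exists_abs_eq_norm x
    rw [hxn] at hi
    by_cases hij : i = j
    · -- both x and (a preimage of e_k) attain their norm; derive |f n| = 0 by contradiction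
      obtain ⟨y, hy⟩ := hsurj (stdUnitVec k)
      have hyn : ‖y‖ = 1 := by rw [← normT y, hy, norm_stdUnitVec]
      obtain ⟨i', hi'⟩ := c0_exists_abs_eq_norm y
      rw [hyn] at hi'
      by_cases hi'j : i' = j
      · exfalso
        have h1 : ‖x + y‖ ≤ 1 := by
          rw [← normT, map_add, hx, hy]
          simpa using norm_comb_le hn (t := (1 : ℝ)) (by norm_num)
        have h2 : ‖x - y‖ ≤ 1 := by
          rw [← normT, map_sub, hx, hy]
          have : stdUnitVec n - stdUnitVec k = stdUnitVec n + (-1 : ℝ) • stdUnitVec k := by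
            module
          rw [this]
          exact norm_comb_le hn (by norm_num)
        have a1 : |x i' + y i'| ≤ 1 := by
          have := c0_apply_le_norm (x + y) i'
          simp only [ZeroAtInftyContinuousMap.coe_add, Pi.add_apply] at this
          exact le_trans this h1
        have a2 : |x i' - y i'| ≤ 1 := by
          have := c0_apply_le_norm (x - y) i'
          simp only [ZeroAtInftyContinuousMap.coe_sub, Pi.sub_apply] at this
          exact le_trans this h2
        have habs := abs_add_abs_le a1 a2
        have hxj : |x j| = 1 := by rw [← hij]; exact hi
        have hyj : |y j| = 1 := by rw [← hi'j]; exact hi'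
        have b1 : |x j + y j| ≤ 1 := by
          have := c0_apply_le_norm (x + y) j
          simp only [ZeroAtInftyContinuousMap.coe_add, Pi.add_apply] at this
          exact le_trans this h1
        have b2 : |x j - y j| ≤ 1 := by
          have := c0_apply_le_norm (x - y) j
          simp only [ZeroAtInftyContinuousMap.coe_sub, Pi.sub_apply] at this
          exact le_trans this h2
        have := abs_add_abs_le b1 b2
        rw [hxj, hyj] at this
        linarith
      · -- i' ≠ j (= i) : get |T e_{i'} at k| = 1, contradicting |f k| = 1
        exfalso
        have hgs : ‖T (stdUnitVec i')‖ ≤ 1 := by rw [normT, norm_stdUnitVec]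
        have hsabs : |y i'| = 1 := hi'
        have h2 : (2 : ℝ) ≤ ‖stdUnitVec k + (y i') • T (stdUnitVec i')‖ := by
          rw [← map_smul, ← hy, ← map_add, normT]
          have hc : (y + (y i') • stdUnitVec i') i' = y i' + y i' * stdUnitVec i' i' := by simp
          have h2' : |(y + (y i') • stdUnitVec i') i'| = 2 := by
            rw [hc, stdUnitVec_apply, if_pos rfl, mul_one, ← two_mul, abs_mul, hsabs]
            norm_num
          calc (2 : ℝ) = |(y + (y i') • stdUnitVec i') i'| := h2'.symm
          _ ≤ ‖y + (y i') • stdUnitVec i'‖ := c0_apply_le_norm _ _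
        have hone := attain_of_two (T (stdUnitVec i')) hgs k hsabs h2
        have hA := lemA i' j hi'j k
        rw [← hf] at hA
        linarith [hk]
    · -- i ≠ j : get |T e_i at n| = 1, then lemA forces f n = 0
      have hgs : ‖T (stdUnitVec i)‖ ≤ 1 := by rw [normT, norm_stdUnitVec]
      have hsabs : |x i| = 1 := hi
      have h2 : (2 : ℝ) ≤ ‖stdUnitVec n + (x i) • T (stdUnitVec i)‖ := by
        rw [← map_smul, ← hx, ← map_add, normT]
        have hc : (x + (x i) • stdUnitVec i) i = x i + x i * stdUnitVec i i := by simp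
        have h2' : |(x + (x i) • stdUnitVec i) i| = 2 := by
          rw [hc, stdUnitVec_apply, if_pos rfl, mul_one, ← two_mul, abs_mul, hsabs]
          norm_num
        calc (2 : ℝ) = |(x + (x i) • stdUnitVec i) i| := h2'.symm
        _ ≤ ‖x + (x i) • stdUnitVec i‖ := c0_apply_le_norm _ _
      have hone := attain_of_two (T (stdUnitVec i)) hgs n hsabs h2
      have hA := lemA i j hij n
      rw [← hf] at hA
      have hle : |f n| ≤ 0 := by linarith
      exact abs_eq_zero.mp (le_antisymm hle (abs_nonneg _))
  -- conclude
  refine ⟨k, ?_⟩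
  have hfk : f k = 1 ∨ f k = -1 := abs_eq (by norm_num : (0:ℝ) ≤ 1) |>.mp hk
  rcases hfk with h | h
  · left
    ext m
    rcases eq_or_ne m k with rfl | hm
    · rw [stdUnitVec_apply, if_pos rfl]; exact h
    · rw [stdUnitVec_apply, if_neg hm]; exact key m hm
  · right
    ext m
    have hcoe : (-stdUnitVec k) m = -(stdUnitVec k m) := by simp
    rw [hcoe]
    rcases eq_or_ne m k with rfl | hm
    · rw [stdUnitVec_apply, if_pos rfl]; simpa using h
    · rw [stdUnitVec_apply, if_neg hm]; simpa using key m hm
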